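/- arXiv:1812.10618 — 4 statements merged into one kernel-verified Lean document; each statement's English description precedes it below -/
import Mathlib

section
/- Let T be a Tychonoff (T3.5) topological space, let 𝒰 be an ω-ultrafilter on T, and let A and B be zero sets of T. If A ∪ B ∈ 𝒰, then A ∈ 𝒰 or B ∈ 𝒰. -/
/-- A zero set of a topological space `T` is a set of the form `f ⁻¹' {0}` for some
bounded continuous function `f : T → ℝ`. -/
def IsZeroSet {T : Type*} [TopologicalSpace T] (Z : Set T) : Prop :=
  ∃ f : BoundedContinuousFunction T ℝ, Z = f ⁻¹' {0}

/-- The finite intersection property: every nonempty finite subfamily has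
nonempty intersection. -/
def HasFIP {T : Type*} (𝒰 : Set (Set T)) : Prop :=
  ∀ S : Set (Set T), S ⊆ 𝒰 → S.Finite → S.Nonempty → (⋂₀ S).Nonempty

/-- An ω-ultrafilter on `T` is a family of zero sets with the finite intersection
property which is maximal (among families of zero sets) with this property. -/
def IsOmegaUltrafilter {T : Type*} [TopologicalSpace T] (𝒰 : Set (Set T)) : Prop :=
  (∀ A ∈ 𝒰, IsZeroSet A) ∧ HasFIP 𝒰 ∧
    ∀ 𝒱 : Set (Set T), (∀ A ∈ 𝒱, IsZeroSet A) → HasFIP 𝒱 → 𝒰 ⊆ 𝒱 → 𝒱 = 𝒰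

/-- If a zero set is not in an ω-ultrafilter, some finite subfamily of the
ultrafilter has intersection disjoint from it. -/
lemma exists_finite_disjoint {T : Type*} [TopologicalSpace T]
    (𝒰 : Set (Set T)) (h𝒰 : IsOmegaUltrafilter 𝒰) (A : Set T)
    (hA : IsZeroSet A) (hmem : A ∉ 𝒰) :
    ∃ F : Set (Set T), F ⊆ 𝒰 ∧ F.Finite ∧ ⋂₀ F ∩ A = ∅ := by
  obtain ⟨hz, hfip, hmax⟩ := h𝒰
  have hnfip : ¬ HasFIP (insert A 𝒰) := by
    intro h
    have := hmax (insert A 𝒰) (by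
      intro X hX
      rcases hX with rfl | hX
      · exact hA
      · exact hz X hX) h (Set.subset_insert _ _)
    exact hmem (this ▸ Set.mem_insert A 𝒰)
  rw [HasFIP] at hnfip
  push_neg at hnfip
  obtain ⟨S, hS𝒰, hSfin, hSne, hSempty⟩ := hnfip
  refine ⟨S \ {A}, ?_, hSfin.diff, ?_⟩
  · intro X hX
    rcases hS𝒰 hX.1 with rfl | h
    · exact absurd rfl hX.2
    · exact h
  · rw [Set.eq_empty_iff_forall_notMem]
    rintro x ⟨hx1, hx2⟩
    have hx : x ∈ ⋂₀ S := by
      intro X hX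
      by_cases hXA : X = A
      · exact hXA ▸ hx2
      · exact hx1 X ⟨hX, hXA⟩
    rw [hSempty] at hx
    exact hx

/-- If the union of two zero sets belongs to an ω-ultrafilter, then one of them does. -/
theorem union_mem_omegaUltrafilter {T : Type*} [TopologicalSpace T] [T35Space T]
    (𝒰 : Set (Set T)) (h𝒰 : IsOmegaUltrafilter 𝒰) (A B : Set T)
    (hA : IsZeroSet A) (hB : IsZeroSet B) (hAB : A ∪ B ∈ 𝒰) :
    A ∈ 𝒰 ∨ B ∈ 𝒰 := by
  by_contra h
  push_neg at h
  obtain ⟨hA𝒰, hB𝒰⟩ := h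
  obtain ⟨FA, hFA𝒰, hFAfin, hFAdisj⟩ := exists_finite_disjoint 𝒰 h𝒰 A hA hA𝒰
  obtain ⟨FB, hFB𝒰, hFBfin, hFBdisj⟩ := exists_finite_disjoint 𝒰 h𝒰 B hB hB𝒰
  obtain ⟨hz, hfip, hmax⟩ := h𝒰
  have := hfip (insert (A ∪ B) (FA ∪ FB))
    (by
      intro X hX
      rcases hX with rfl | hX | hX
      · exact hAB
      · exact hFA𝒰 hX
      · exact hFB𝒰 hX)
    ((hFAfin.union hFBfin).insert _) ⟨A ∪ B, Set.mem_insert _ _⟩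
  obtain ⟨x, hx⟩ := this
  have hxAB : x ∈ A ∪ B := hx _ (Set.mem_insert _ _)
  have hxFA : x ∈ ⋂₀ FA := fun X hX => hx X (Set.mem_insert_iff.2 (Or.inr (Or.inl hX)))
  have hxFB : x ∈ ⋂₀ FB := fun X hX => hx X (Set.mem_insert_iff.2 (Or.inr (Or.inr hX)))
  rcases hxAB with hxA | hxB
  · exact absurd (Set.mem_inter hxFA hxA) (hFAdisj ▸ Set.notMem_empty x)
  · exact absurd (Set.mem_inter hxFB hxB) (hFBdisj ▸ Set.notMem_empty x)
end

section
/- (Arzelà–Ascoli theorem via the Wallman/Stone–Čech compactification.) Let T be a Tychonoff (T3.5) topological space. A family ℱ ⊆ C^b(T) is relatively compact in C^b(T) (with the supremum norm) if and only if both of the following hold: (AA1) ℱ is pointwise bounded, i.e. for every t ∈ T the set {f(t) : f ∈ ℱ} ⊆ ℂ is bounded; and (AA2) ℱ is ω-equicontinuous, i.e. for every ε > 0 and every u ∈ βT there exists an open set W ⊆ βT with u ∈ W such that |f(t) − f̂(u)| < ε for every f ∈ ℱ and every t ∈ T with φ(t) ∈ W. -/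
open BoundedContinuousFunction

private lemma hat_dist_le {T : Type*} [TopologicalSpace T]
    (hat : BoundedContinuousFunction T ℂ → C(StoneCech T, ℂ))
    (hhat : ∀ f : BoundedContinuousFunction T ℂ, ∀ t : T, hat f (stoneCechUnit t) = f t)
    (g h : BoundedContinuousFunction T ℂ) (u : StoneCech T) :
    dist (hat g u) (hat h u) ≤ dist g h := by
  have hcl : IsClosed {v : StoneCech T | dist (hat g v) (hat h v) ≤ dist g h} :=
    isClosed_le (((hat g).continuous.dist (hat h).continuous)) continuous_const
  have hsub : Set.range (stoneCechUnit : T → StoneCech T) ⊆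
      {v : StoneCech T | dist (hat g v) (hat h v) ≤ dist g h} := by
    rintro _ ⟨t, rfl⟩
    simp only [Set.mem_setOf_eq, hhat]
    exact dist_coe_le_dist t
  have := hcl.closure_subset_iff.2 hsub
  rw [denseRange_stoneCechUnit.closure_range] at this
  exact this (Set.mem_univ u)

/-- **Arzelà–Ascoli theorem via the Wallman/Stone–Čech compactification.**
Here `hat f : C(βT, ℂ)` denotes the (necessarily unique, by density) continuous
extension of `f ∈ C^b(T)` to the Stone–Čech compactification `βT`.
A family `ℱ ⊆ C^b(T)` is relatively compact iff it is pointwise bounded (AA1) and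
ω-equicontinuous (AA2). -/
theorem arzelaAscoli_wallman {T : Type*} [TopologicalSpace T] [T35Space T]
    (hat : BoundedContinuousFunction T ℂ → C(StoneCech T, ℂ))
    (hhat : ∀ f : BoundedContinuousFunction T ℂ, ∀ t : T, hat f (stoneCechUnit t) = f t)
    (ℱ : Set (BoundedContinuousFunction T ℂ)) :
    IsCompact (closure ℱ) ↔
      ((∀ t : T, Bornology.IsBounded ((fun f : BoundedContinuousFunction T ℂ => f t) '' ℱ)) ∧
       (∀ ε : ℝ, 0 < ε → ∀ u : StoneCech T, ∃ W : Set (StoneCech T), IsOpen W ∧ u ∈ W ∧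
          ∀ f ∈ ℱ, ∀ t : T, stoneCechUnit t ∈ W → ‖f t - hat f u‖ < ε)) := by
  constructor
  · intro hcomp
    constructor
    · -- AA1
      intro t
      have : Bornology.IsBounded ((fun f : BoundedContinuousFunction T ℂ => f t) '' closure ℱ) :=
        (hcomp.image (continuous_eval_const t)).isBounded
      exact this.subset (Set.image_mono subset_closure)
    · -- AA2
      intro ε hε u
      have hTB : TotallyBounded ℱ := hcomp.totallyBounded.subset subset_closure
      obtain ⟨F, hFfin, hFcov⟩ := Metric.totallyBounded_iff.1 hTB (ε/4) (by linarith)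
      refine ⟨⋂ g ∈ F, (hat g) ⁻¹' Metric.ball (hat g u) (ε/4), ?_, ?_, ?_⟩
      · exact hFfin.isOpen_biInter fun g _ =>
          (Metric.isOpen_ball).preimage (hat g).continuous
      · exact Set.mem_iInter₂.2 fun g _ => Metric.mem_ball_self (by linarith)
      · intro f hf t ht
        obtain ⟨g, hgF, hfg⟩ := Set.mem_iUnion₂.1 (hFcov hf)
        rw [Metric.mem_ball] at hfg
        have h1 : dist (f t) (g t) ≤ dist f g := dist_coe_le_dist t
        have h2 : dist (g t) (hat g u) < ε/4 := by
          have := Set.mem_iInter₂.1 ht g hgF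
          rw [Set.mem_preimage, Metric.mem_ball, hhat] at this
          exact this
        have h3 : dist (hat g u) (hat f u) ≤ dist g f := hat_dist_le hat hhat g f u
        have : dist (f t) (hat f u) < ε := by
          calc dist (f t) (hat f u) ≤ dist (f t) (g t) + dist (g t) (hat g u)
                + dist (hat g u) (hat f u) := dist_triangle4 _ _ _ _
            _ < ε := by rw [dist_comm g f] at h3; linarith
        rwa [Complex.dist_eq] at this
  · rintro ⟨hb, heq⟩
    refine TotallyBounded.isCompact_of_isClosed (TotallyBounded.closure ?_) isClosed_closure
    rw [Metric.totallyBounded_iff]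
    intro ε hε
    set δ := ε/8 with hδdef
    have hδ : 0 < δ := by positivity
    -- choose the opens
    choose W hWopen hWmem hWprop using heq δ hδ
    obtain ⟨s, hscov⟩ := isCompact_univ.elim_finite_subcover W hWopen
      (fun u _ => Set.mem_iUnion.2 ⟨u, hWmem u⟩)
    -- for each u ∈ s pick a point of T mapping into W u
    have hpt : ∀ u : StoneCech T, ∃ t : T, stoneCechUnit t ∈ W u := fun u =>
      denseRange_stoneCechUnit.exists_mem_open (hWopen u) ⟨u, hWmem u⟩
    choose pt hpt using hpt
    -- the evaluation vector
    set Φ : BoundedContinuousFunction T ℂ → (s → ℂ) := fun f i => hat f (i : StoneCech T)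
      with hΦdef
    -- boundedness of Φ '' ℱ
    have hbd : Bornology.IsBounded (Φ '' ℱ) := by
      have hC : ∀ i : s, ∃ C : ℝ, ∀ f ∈ ℱ, ‖f (pt (i : StoneCech T))‖ ≤ C := by
        intro i
        obtain ⟨C, hC⟩ := (isBounded_iff_forall_norm_le).1 (hb (pt (i : StoneCech T)))
        exact ⟨C, fun f hf => hC _ ⟨f, hf, rfl⟩⟩
      choose C hC using hC
      rw [isBounded_iff_forall_norm_le]
      refine ⟨δ + (∑ i : s, |C i|), ?_⟩
      rintro _ ⟨f, hf, rfl⟩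
      have hnn : (0:ℝ) ≤ δ + ∑ i : s, |C i| := by
        have : (0:ℝ) ≤ ∑ i : s, |C i| := Finset.sum_nonneg fun i _ => abs_nonneg _
        linarith
      rw [pi_norm_le_iff_of_nonneg hnn]
      intro i
      have h1 : dist (f (pt (i : StoneCech T))) (hat f (i : StoneCech T)) < δ := by
        have := hWprop (i : StoneCech T) f hf (pt (i : StoneCech T)) (hpt (i : StoneCech T))
        rwa [← Complex.dist_eq] at this
      have h2 : ‖f (pt (i : StoneCech T))‖ ≤ C i := hC i f hf
      have h3 : |C i| ≤ ∑ j : s, |C j| :=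
        Finset.single_le_sum (f := fun j : s => |C j|) (fun j _ => abs_nonneg _)
          (Finset.mem_univ i)
      have : ‖Φ f i‖ ≤ ‖Φ f i - f (pt (i : StoneCech T))‖ + ‖f (pt (i : StoneCech T))‖ := by
        have := norm_sub_norm_le (Φ f i) (f (pt (i : StoneCech T)))
        linarith [abs_le.1 (abs_norm_sub_norm_le (Φ f i) (f (pt (i : StoneCech T))))]
      have h4 : ‖Φ f i - f (pt (i : StoneCech T))‖ < δ := by
        rw [← dist_eq_norm, dist_comm]; exact h1
      have h5 : C i ≤ |C i| := le_abs_self _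
      calc ‖Φ f i‖ ≤ ‖Φ f i - f (pt (i : StoneCech T))‖ + ‖f (pt (i : StoneCech T))‖ := this
        _ ≤ δ + ∑ j : s, |C j| := by linarith
    -- total boundedness of Φ '' ℱ, net inside the image
    have hTBim : TotallyBounded (Φ '' ℱ) := hbd.isCompact_closure.totallyBounded.subset
      subset_closure
    obtain ⟨N, hNsub, hNfin, hNcov⟩ := totallyBounded_iff_subset.1 hTBim
      {p : (s → ℂ) × (s → ℂ) | dist p.1 p.2 < δ} (Metric.dist_mem_uniformity hδ)
    -- pick preimages of net points
    have hpre : ∀ y ∈ N, ∃ g ∈ ℱ, Φ g = y := fun y hy => by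
      obtain ⟨g, hg, hgy⟩ := hNsub hy; exact ⟨g, hg, hgy⟩
    choose! G hGmem hGeq using hpre
    refine ⟨G '' N, hNfin.image G, ?_⟩
    intro f hf
    obtain ⟨y, hy, hfy⟩ := Set.mem_iUnion₂.1 (hNcov ⟨f, hf, rfl⟩)
    simp only [Set.mem_setOf_eq] at hfy
    refine Set.mem_iUnion₂.2 ⟨G y, ⟨y, hy, rfl⟩, ?_⟩
    rw [Metric.mem_ball]
    have hdle : dist f (G y) ≤ 3 * δ := by
      refine BoundedContinuousFunction.dist_le (by linarith) |>.2 ?_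
      intro x
      obtain ⟨u, hus, hxu⟩ := Set.mem_iUnion₂.1 (hscov (Set.mem_univ (stoneCechUnit x)))
      have h1 : dist (f x) (hat f u) < δ := by
        have := hWprop u f hf x hxu
        rwa [← Complex.dist_eq] at this
      have h2 : dist (hat (G y) u) (G y x) < δ := by
        have := hWprop u (G y) (hGmem y hy) x hxu
        rw [← Complex.dist_eq, dist_comm] at this
        exact this
      have h3 : dist (hat f u) (hat (G y) u) < δ := by
        have hcoord : dist (Φ f ⟨u, hus⟩) (Φ (G y) ⟨u, hus⟩) ≤ dist (Φ f) (Φ (G y)) :=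
          dist_le_pi_dist _ _ _
        have : dist (Φ f) (Φ (G y)) < δ := by rw [hGeq y hy]; exact hfy
        calc dist (hat f u) (hat (G y) u) = dist (Φ f ⟨u, hus⟩) (Φ (G y) ⟨u, hus⟩) := rfl
          _ ≤ dist (Φ f) (Φ (G y)) := hcoord
          _ < δ := this
      calc dist (f x) (G y x) ≤ dist (f x) (hat f u) + dist (hat f u) (hat (G y) u)
            + dist (hat (G y) u) (G y x) := dist_triangle4 _ _ _ _
        _ ≤ 3 * δ := by linarith
    calc dist f (G y) ≤ 3 * δ := hdle
      _ < ε := by rw [hδdef]; linarith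
end

section
/- Let T be a Tychonoff (T3.5) topological space. The functional ω : 𝒫(C^b(T)) → [0,∞] satisfies: (MN2) if ℱ ⊆ 𝒢 ⊆ C^b(T) then ω(ℱ) ≤ ω(𝒢); (MN3) ω(cl ℱ) = ω(ℱ), where cl is closure in the supremum norm on C^b(T); (MN4) ω(λ·ℱ) = |λ|·ω(ℱ) for every λ ∈ ℂ; (MN5) ω(ℱ ∪ 𝒢) = ω(ℱ) for every finite 𝒢 ⊆ C^b(T); (MN6) ω(convexHull ℱ) = ω(ℱ). -/
open BoundedContinuousFunction ENNReal Pointwise Set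

variable {T : Type*} [TopologicalSpace T]

/-- `ω^u(ℱ, W) := sup { |f̂(u) − f(t)| : f ∈ ℱ, t ∈ T, φ(t) ∈ W } ∈ [0,∞]`, where
`hat f = f̂` is the continuous extension of `f` to the Stone–Čech compactification. -/
noncomputable def omegaUW (hat : BoundedContinuousFunction T ℂ → C(StoneCech T, ℂ))
    (ℱ : Set (BoundedContinuousFunction T ℂ)) (u : StoneCech T) (W : Set (StoneCech T)) :
    ℝ≥0∞ :=
  ⨆ f ∈ ℱ, ⨆ t ∈ (stoneCechUnit ⁻¹' W : Set T), (‖hat f u - f t‖₊ : ℝ≥0∞)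

/-- `ω^u(ℱ) := inf { ω^u(ℱ, W) : W ⊆ βT open, u ∈ W }`. -/
noncomputable def omegaU (hat : BoundedContinuousFunction T ℂ → C(StoneCech T, ℂ))
    (ℱ : Set (BoundedContinuousFunction T ℂ)) (u : StoneCech T) : ℝ≥0∞ :=
  ⨅ (W : Set (StoneCech T)) (_ : IsOpen W ∧ u ∈ W), omegaUW hat ℱ u W

/-- `ω(ℱ) := sup_{u ∈ βT} ω^u(ℱ)`, the measure of non-ω-equicontinuity. -/
noncomputable def omegaMeasure (hat : BoundedContinuousFunction T ℂ → C(StoneCech T, ℂ))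
    (ℱ : Set (BoundedContinuousFunction T ℂ)) : ℝ≥0∞ :=
  ⨆ u : StoneCech T, omegaU hat ℱ u

variable {hat : BoundedContinuousFunction T ℂ → C(StoneCech T, ℂ)}

variable {ℱ 𝒢 : Set (BoundedContinuousFunction T ℂ)} {u : StoneCech T}
  {W W₁ W₂ : Set (StoneCech T)}

lemma le_omegaUW {f t} (hf : f ∈ ℱ) (ht : stoneCechUnit t ∈ W) :
    (‖hat f u - f t‖₊ : ℝ≥0∞) ≤ omegaUW hat ℱ u W :=
  le_iSup₂_of_le f hf (le_iSup₂_of_le t ht le_rfl)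

lemma omegaUW_le {c : ℝ≥0∞} (h : ∀ f ∈ ℱ, ∀ t, stoneCechUnit t ∈ W →
    (‖hat f u - f t‖₊ : ℝ≥0∞) ≤ c) : omegaUW hat ℱ u W ≤ c :=
  iSup₂_le fun f hf => iSup₂_le fun t ht => h f hf t ht

lemma omegaUW_mono_left (h : ℱ ⊆ 𝒢) : omegaUW hat ℱ u W ≤ omegaUW hat 𝒢 u W :=
  omegaUW_le fun f hf t ht => le_omegaUW (h hf) ht

lemma omegaUW_mono_right (h : W₁ ⊆ W₂) : omegaUW hat ℱ u W₁ ≤ omegaUW hat ℱ u W₂ :=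
  omegaUW_le fun _ hf _ ht => le_omegaUW hf (h ht)

lemma omegaU_le (hW : IsOpen W) (hu : u ∈ W) : omegaU hat ℱ u ≤ omegaUW hat ℱ u W :=
  iInf₂_le W ⟨hW, hu⟩

lemma omegaU_le_add {c : ℝ≥0∞}
    (h : ∀ W, IsOpen W → u ∈ W → omegaU hat ℱ u ≤ omegaUW hat 𝒢 u W + c) :
    omegaU hat ℱ u ≤ omegaU hat 𝒢 u + c := by
  have : omegaU hat 𝒢 u + c
      = ⨅ (W : Set (StoneCech T)) (_ : IsOpen W ∧ u ∈ W), (omegaUW hat 𝒢 u W + c) := by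
    rw [omegaU]; simp_rw [ENNReal.iInf_add]
  rw [this]
  exact le_iInf fun V => le_iInf fun hV => h V hV.1 hV.2

lemma omegaU_mono (h : ℱ ⊆ 𝒢) : omegaU hat ℱ u ≤ omegaU hat 𝒢 u :=
  iInf_mono fun V => iInf_mono fun _ => omegaUW_mono_left h

lemma omegaMeasure_mono (h : ℱ ⊆ 𝒢) : omegaMeasure hat ℱ ≤ omegaMeasure hat 𝒢 :=
  iSup_mono fun _ => omegaU_mono h

lemma omegaU_union_le : omegaU hat (ℱ ∪ 𝒢) u ≤ omegaU hat ℱ u ⊔ omegaU hat 𝒢 u := by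
  have key : ∀ V₁ V₂ : Set (StoneCech T), IsOpen V₁ → u ∈ V₁ → IsOpen V₂ → u ∈ V₂ →
      omegaU hat (ℱ ∪ 𝒢) u ≤ omegaUW hat ℱ u V₁ ⊔ omegaUW hat 𝒢 u V₂ := by
    intro V₁ V₂ h₁ hu₁ h₂ hu₂
    refine (omegaU_le (h₁.inter h₂) ⟨hu₁, hu₂⟩).trans ?_
    refine omegaUW_le fun f hf t ht => ?_
    rcases hf with hf | hf
    · exact le_sup_of_le_left (le_omegaUW hf ht.1)
    · exact le_sup_of_le_right (le_omegaUW hf ht.2)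
  have h1 : omegaU hat ℱ u ⊔ omegaU hat 𝒢 u
      = ⨅ (V₁ : Set (StoneCech T)) (_ : IsOpen V₁ ∧ u ∈ V₁)
          (V₂ : Set (StoneCech T)) (_ : IsOpen V₂ ∧ u ∈ V₂),
          (omegaUW hat ℱ u V₁ ⊔ omegaUW hat 𝒢 u V₂) := by
    rw [omegaU, omegaU]
    rw [iInf_sup_eq]; refine iInf_congr fun V₁ => ?_
    rw [iInf_sup_eq]; refine iInf_congr fun _ => ?_
    rw [sup_iInf_eq]; refine iInf_congr fun V₂ => ?_
    rw [sup_iInf_eq]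
  rw [h1]
  exact le_iInf fun V₁ => le_iInf fun h₁ => le_iInf fun V₂ => le_iInf fun h₂ =>
    key V₁ V₂ h₁.1 h₁.2 h₂.1 h₂.2

lemma omegaU_empty : omegaU hat (∅ : Set (BoundedContinuousFunction T ℂ)) u = 0 := by
  refine le_antisymm ((omegaU_le isOpen_univ (mem_univ u)).trans ?_) zero_le
  simp [omegaUW]

section
variable (hhat : ∀ f : BoundedContinuousFunction T ℂ, ∀ t : T, hat f (stoneCechUnit t) = f t)
include hhat

lemma hat_spec {f : BoundedContinuousFunction T ℂ} {h : C(StoneCech T, ℂ)}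
    (hh : ∀ t, h (stoneCechUnit t) = f t) : ∀ u, hat f u = h u := by
  have : (hat f : StoneCech T → ℂ) = h :=
    stoneCech_hom_ext (map_continuous _) (map_continuous _)
      (funext fun t => by simp only [Function.comp_apply, hhat, hh])
  intro u; rw [this]

lemma hat_dist (f g : BoundedContinuousFunction T ℂ) (u : StoneCech T) :
    ‖hat f u - hat g u‖ ≤ ‖f - g‖ := by
  set S : Set (StoneCech T) := {v | ‖hat f v - hat g v‖ ≤ ‖f - g‖} with hS
  have hclosed : IsClosed S :=
    isClosed_le (((map_continuous (hat f)).sub (map_continuous (hat g))).norm) continuous_const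
  have hrange : Set.range (stoneCechUnit : T → StoneCech T) ⊆ S := by
    rintro _ ⟨t, rfl⟩
    have h1 := (f - g).norm_coe_le_norm t
    rw [BoundedContinuousFunction.coe_sub, Pi.sub_apply] at h1
    show ‖hat f (stoneCechUnit t) - hat g (stoneCechUnit t)‖ ≤ ‖f - g‖
    rw [hhat, hhat]; exact h1
  exact hclosed.closure_subset_iff.2 hrange (denseRange_stoneCechUnit u)

lemma omegaU_singleton (f : BoundedContinuousFunction T ℂ) :
    omegaU hat {f} u = 0 := by
  refine le_antisymm ?_ zero_le
  refine ENNReal.le_of_forall_pos_le_add fun ε hε _ => ?_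
  rw [zero_add]
  set W : Set (StoneCech T) := hat f ⁻¹' Metric.ball (hat f u) ε with hW
  have hWopen : IsOpen W := (Metric.isOpen_ball).preimage (map_continuous (hat f))
  have hWu : u ∈ W := Metric.mem_ball_self (by exact_mod_cast hε)
  refine (omegaU_le hWopen hWu).trans (omegaUW_le fun g hg t ht => ?_)
  rcases hg with rfl
  have hd : dist (hat g u) (hat g (stoneCechUnit t)) < ε := by
    rw [dist_comm]; exact ht
  have : ‖hat g u - g t‖ ≤ (ε : ℝ) := by
    rw [← hhat g t, ← dist_eq_norm]; exact hd.le
  rw [← enorm_eq_nnnorm, ← ofReal_norm]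
  calc ENNReal.ofReal ‖hat g u - g t‖ ≤ ENNReal.ofReal (ε : ℝ) :=
        ENNReal.ofReal_le_ofReal this
    _ = (ε : ℝ≥0∞) := ENNReal.ofReal_coe_nnreal

lemma omegaUW_closure_le {ε : NNReal} (hε : 0 < ε) :
    omegaUW hat (closure ℱ) u W ≤ omegaUW hat ℱ u W + ε := by
  refine omegaUW_le fun f hf t ht => ?_
  have hε2 : (0 : ℝ) < (ε : ℝ) / 2 := by positivity
  obtain ⟨g, hg, hdist⟩ := Metric.mem_closure_iff.1 hf _ hε2
  have h1 : edist (hat f u) (hat g u) ≤ ENNReal.ofReal ((ε : ℝ) / 2) := by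
    rw [edist_dist]
    refine ENNReal.ofReal_le_ofReal ?_
    calc dist (hat f u) (hat g u) = ‖hat f u - hat g u‖ := dist_eq_norm _ _
      _ ≤ ‖f - g‖ := hat_dist hhat f g u
      _ ≤ (ε : ℝ) / 2 := by rw [← dist_eq_norm]; exact hdist.le
  have h3 : edist (g t) (f t) ≤ ENNReal.ofReal ((ε : ℝ) / 2) := by
    rw [edist_dist]
    refine ENNReal.ofReal_le_ofReal ?_
    have := (f - g).norm_coe_le_norm t
    rw [BoundedContinuousFunction.coe_sub, Pi.sub_apply] at this
    calc dist (g t) (f t) = ‖f t - g t‖ := by rw [dist_comm, dist_eq_norm]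
      _ ≤ ‖f - g‖ := this
      _ ≤ (ε : ℝ) / 2 := by rw [← dist_eq_norm]; exact hdist.le
  have h2 : edist (hat g u) (g t) ≤ omegaUW hat ℱ u W := by
    rw [edist_eq_enorm_sub, enorm_eq_nnnorm]; exact le_omegaUW hg ht
  have tri := edist_triangle4 (hat f u) (hat g u) (g t) (f t)
  rw [edist_eq_enorm_sub, enorm_eq_nnnorm] at tri
  refine tri.trans ?_
  calc edist (hat f u) (hat g u) + edist (hat g u) (g t) + edist (g t) (f t)
      ≤ ENNReal.ofReal ((ε : ℝ) / 2) + omegaUW hat ℱ u W + ENNReal.ofReal ((ε : ℝ) / 2) :=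
        add_le_add (add_le_add h1 h2) h3
    _ = omegaUW hat ℱ u W + (ENNReal.ofReal ((ε : ℝ) / 2) + ENNReal.ofReal ((ε : ℝ) / 2)) := by
        ring
    _ = omegaUW hat ℱ u W + ε := by
        rw [← ENNReal.ofReal_add (by positivity) (by positivity)]
        norm_num

lemma omegaU_closure_le : omegaU hat (closure ℱ) u ≤ omegaU hat ℱ u := by
  refine ENNReal.le_of_forall_pos_le_add fun ε hε _ => ?_
  exact omegaU_le_add fun V hV hu =>
    (omegaU_le hV hu).trans (omegaUW_closure_le hhat hε)

end

section
variable (hhat : ∀ f : BoundedContinuousFunction T ℂ, ∀ t : T, hat f (stoneCechUnit t) = f t)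
include hhat

lemma omegaUW_convexHull_le :
    omegaUW hat (convexHull ℝ ℱ) u W ≤ omegaUW hat ℱ u W := by
  refine omegaUW_le fun f hf t ht => ?_
  set Ω := omegaUW hat ℱ u W with hΩdef
  by_cases hΩ : Ω = ⊤
  · rw [hΩ]; exact le_top
  rw [convexHull_eq] at hf
  obtain ⟨ι, s, w, z, hw0, hw1, hz, hfc⟩ := hf
  have hfsum : f = ∑ i ∈ s, w i • z i := by
    rw [← hfc, Finset.centerMass_eq_of_sum_1 _ _ hw1]
  have hcont : Continuous fun v => ∑ i ∈ s, w i • hat (z i) v := by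
    apply continuous_finset_sum
    intro i _
    exact (map_continuous (hat (z i))).const_smul (w i)
  have hhatf : ∀ v, hat f v = ∑ i ∈ s, w i • hat (z i) v := by
    refine hat_spec hhat (h := ⟨fun v => ∑ i ∈ s, w i • hat (z i) v, hcont⟩) fun t' => ?_
    simp only [ContinuousMap.coe_mk, hhat]
    rw [hfsum]
    rw [BoundedContinuousFunction.coe_sum, Finset.sum_apply]
    simp [BoundedContinuousFunction.coe_smul]
  have hkey : ∀ i ∈ s, ‖hat (z i) u - z i t‖ ≤ Ω.toReal := by
    intro i hi
    have h1 : (‖hat (z i) u - z i t‖₊ : ℝ≥0∞) ≤ Ω := le_omegaUW (hz i hi) ht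
    have h2 := ENNReal.toReal_mono hΩ h1
    simpa [coe_nnnorm] using h2
  have hdiff : hat f u - f t = ∑ i ∈ s, w i • (hat (z i) u - z i t) := by
    rw [hhatf u]
    conv_lhs => rw [hfsum]
    rw [BoundedContinuousFunction.coe_sum, Finset.sum_apply, ← Finset.sum_sub_distrib]
    refine Finset.sum_congr rfl fun i _ => ?_
    rw [smul_sub, BoundedContinuousFunction.coe_smul]
  have hnorm : ‖hat f u - f t‖ ≤ Ω.toReal := by
    rw [hdiff]
    calc ‖∑ i ∈ s, w i • (hat (z i) u - z i t)‖
        ≤ ∑ i ∈ s, ‖w i • (hat (z i) u - z i t)‖ := norm_sum_le _ _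
      _ = ∑ i ∈ s, w i * ‖hat (z i) u - z i t‖ := by
          refine Finset.sum_congr rfl fun i hi => ?_
          rw [norm_smul, Real.norm_of_nonneg (hw0 i hi)]
      _ ≤ ∑ i ∈ s, w i * Ω.toReal :=
          Finset.sum_le_sum fun i hi => mul_le_mul_of_nonneg_left (hkey i hi) (hw0 i hi)
      _ = Ω.toReal := by rw [← Finset.sum_mul, hw1, one_mul]
  rw [← enorm_eq_nnnorm, ← ofReal_norm, ← ENNReal.ofReal_toReal hΩ]
  exact ENNReal.ofReal_le_ofReal hnorm

lemma omegaUW_smul (l : ℂ) :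
    omegaUW hat (l • ℱ) u W = (‖l‖₊ : ℝ≥0∞) * omegaUW hat ℱ u W := by
  have hsmul : ∀ g : BoundedContinuousFunction T ℂ, ∀ v, hat (l • g) v = l • hat g v :=
    fun g => hat_spec hhat (h := l • hat g) fun t => by
      simp [ContinuousMap.coe_smul, hhat]
  rw [omegaUW, omegaUW,
    show l • ℱ = (fun g => l • g) '' ℱ from (Set.image_smul).symm, iSup_image]
  simp_rw [ENNReal.mul_iSup]
  refine iSup_congr fun f => iSup_congr fun hf => iSup_congr fun t => iSup_congr fun ht => ?_
  rw [hsmul f u, BoundedContinuousFunction.coe_smul]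
  show (‖l • hat f u - l • f t‖₊ : ℝ≥0∞) = _
  rw [← smul_sub, nnnorm_smul, ENNReal.coe_mul]

lemma omegaU_smul (l : ℂ) :
    omegaU hat (l • ℱ) u = (‖l‖₊ : ℝ≥0∞) * omegaU hat ℱ u := by
  rcases eq_or_ne l 0 with rfl | hl
  · simp only [nnnorm_zero, ENNReal.coe_zero, zero_mul]
    rcases ℱ.eq_empty_or_nonempty with rfl | hne
    · rw [Set.smul_set_empty]; exact omegaU_empty
    · rw [Set.zero_smul_set hne, ← Set.singleton_zero]
      exact omegaU_singleton hhat 0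
  · have hl0 : (‖l‖₊ : ℝ≥0∞) ≠ 0 := ENNReal.coe_ne_zero.2 (nnnorm_ne_zero_iff.2 hl)
    rw [omegaU, omegaU]
    simp_rw [omegaUW_smul hhat]
    rw [ENNReal.mul_iInf_of_ne hl0 ENNReal.coe_ne_top]
    exact iInf_congr fun V => (ENNReal.mul_iInf_of_ne hl0 ENNReal.coe_ne_top).symm

lemma omegaU_finset (s : Finset (BoundedContinuousFunction T ℂ)) :
    omegaU hat (↑s : Set (BoundedContinuousFunction T ℂ)) u = 0 := by
  classical
  induction s using Finset.induction_on with
  | empty => simpa using (omegaU_empty (hat := hat) (u := u))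
  | insert a s ha ih =>
    refine le_antisymm ?_ zero_le
    rw [Finset.coe_insert, Set.insert_eq]
    refine omegaU_union_le.trans ?_
    rw [omegaU_singleton hhat a, ih]
    simp

lemma omegaU_finite (h𝒢 : 𝒢.Finite) : omegaU hat 𝒢 u = 0 := by
  rw [← h𝒢.coe_toFinset]
  exact omegaU_finset hhat _

end

lemma omegaU_convexHull_le'
    (hhat : ∀ f : BoundedContinuousFunction T ℂ, ∀ t : T, hat f (stoneCechUnit t) = f t) :
    omegaU hat (convexHull ℝ ℱ) u ≤ omegaU hat ℱ u := by
  rw [omegaU, omegaU]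
  exact iInf_mono fun V => iInf_mono fun _ => omegaUW_convexHull_le hhat

/-- The functional `ω` satisfies the measure-of-non-compactness axioms (MN2)–(MN6)
on `𝒫(C^b(T))` (with the supremum norm on `C^b(T)`). -/
theorem omega_satisfies_MN2_to_MN6 [T35Space T]
    (hat : BoundedContinuousFunction T ℂ → C(StoneCech T, ℂ))
    (hhat : ∀ f : BoundedContinuousFunction T ℂ, ∀ t : T, hat f (stoneCechUnit t) = f t) :
    (∀ ℱ 𝒢 : Set (BoundedContinuousFunction T ℂ), ℱ ⊆ 𝒢 →
      omegaMeasure hat ℱ ≤ omegaMeasure hat 𝒢) ∧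
    (∀ ℱ : Set (BoundedContinuousFunction T ℂ),
      omegaMeasure hat (closure ℱ) = omegaMeasure hat ℱ) ∧
    (∀ (l : ℂ) (ℱ : Set (BoundedContinuousFunction T ℂ)),
      omegaMeasure hat (l • ℱ) = (‖l‖₊ : ℝ≥0∞) * omegaMeasure hat ℱ) ∧
    (∀ ℱ 𝒢 : Set (BoundedContinuousFunction T ℂ), 𝒢.Finite →
      omegaMeasure hat (ℱ ∪ 𝒢) = omegaMeasure hat ℱ) ∧
    (∀ ℱ : Set (BoundedContinuousFunction T ℂ),
      omegaMeasure hat (convexHull ℝ ℱ) = omegaMeasure hat ℱ) := by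
  refine ⟨fun ℱ 𝒢 h => omegaMeasure_mono h, fun ℱ => ?_, fun l ℱ => ?_,
    fun ℱ 𝒢 h𝒢 => ?_, fun ℱ => ?_⟩
  · refine le_antisymm (iSup_le fun u => ?_) (omegaMeasure_mono subset_closure)
    exact (omegaU_closure_le hhat).trans (le_iSup _ u)
  · rw [omegaMeasure, omegaMeasure, ENNReal.mul_iSup]
    exact iSup_congr fun u => omegaU_smul hhat l
  · refine le_antisymm (iSup_le fun u => ?_) (omegaMeasure_mono Set.subset_union_left)
    refine (omegaU_union_le).trans ?_
    rw [omegaU_finite hhat h𝒢]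
    simpa [omegaMeasure] using (le_iSup (fun v => omegaU hat ℱ v) u)
  · refine le_antisymm (iSup_le fun u => ?_) (omegaMeasure_mono (subset_convexHull ℝ ℱ))
    exact (omegaU_convexHull_le' hhat).trans (le_iSup _ u)
end

section
/- Let ℱ := { x ↦ xⁿ : n ∈ ℕ, n ≥ 1 } ⊆ C([0,1], ℝ). Then the Hausdorff measure of non-compactness of ℱ equals 1/2; that is, inf { ε > 0 : there exists a finite set G ⊆ C([0,1], ℝ) such that for every n ≥ 1 there is g ∈ G with ‖(x ↦ xⁿ) − g‖_∞ ≤ ε } = 1/2. -/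
/-- The function `x ↦ xⁿ` as an element of `C([0,1], ℝ)`. -/
noncomputable def monomial (n : ℕ) : C(Set.Icc (0 : ℝ) 1, ℝ) :=
  ⟨fun x => (x : ℝ) ^ n, by fun_prop⟩

lemma half_mem_mnc_set : (0:ℝ) < 1/2 ∧ ∃ G : Finset C(Set.Icc (0 : ℝ) 1, ℝ),
    ∀ n : ℕ, 1 ≤ n → ∃ g ∈ G, ‖monomial n - g‖ ≤ 1/2 := by
  refine ⟨by norm_num, {(1/2 : ℝ) • monomial 1}, fun n hn => ?_⟩
  refine ⟨(1/2 : ℝ) • monomial 1, Finset.mem_singleton_self _, ?_⟩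
  rw [ContinuousMap.norm_le _ (by norm_num)]
  intro x
  have hx0 : (0:ℝ) ≤ x := x.2.1
  have hx1 : (x:ℝ) ≤ 1 := x.2.2
  have hxn : (x:ℝ)^n ≤ (x:ℝ) := by
    calc (x:ℝ)^n ≤ (x:ℝ)^1 := pow_le_pow_of_le_one hx0 hx1 hn
    _ = x := pow_one _
  have hxnn : 0 ≤ (x:ℝ)^n := pow_nonneg hx0 n
  simp only [ContinuousMap.sub_apply, ContinuousMap.smul_apply, monomial,
    ContinuousMap.coe_mk, smul_eq_mul, Real.norm_eq_abs, pow_one]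
  rw [abs_le]
  constructor <;> nlinarith

lemma mnc_lower_bound (ε : ℝ) (hε : 0 < ε) (G : Finset C(Set.Icc (0 : ℝ) 1, ℝ))
    (hG : ∀ n : ℕ, 1 ≤ n → ∃ g ∈ G, ‖monomial n - g‖ ≤ ε) : 1/2 ≤ ε := by
  by_contra h
  push_neg at h
  set a := 2 * ε with ha
  have ha0 : 0 < a := by positivity
  have ha1 : a < 1 := by linarith
  choose g hgG hg using fun n => hG (n+1) (Nat.le_add_left 1 n)
  obtain ⟨y, hy⟩ := Finite.exists_infinite_fiber
    (fun n : ℕ => (⟨g n, hgG n⟩ : {x // x ∈ G}))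
  have hT : Set.Infinite ((fun n : ℕ => (⟨g n, hgG n⟩ : {x // x ∈ G})) ⁻¹' {y}) :=
    Set.infinite_coe_iff.mp hy
  obtain ⟨n0, hn0⟩ := hT.nonempty
  set t : ℝ := ((3+a)/4) ^ (((n0+1 : ℕ)):ℝ)⁻¹ with htdef
  have hb0 : (0:ℝ) ≤ (3+a)/4 := by linarith
  have hb1 : (3+a)/4 < 1 := by linarith
  have ht0 : 0 ≤ t := Real.rpow_nonneg hb0 _
  have ht1 : t < 1 := Real.rpow_lt_one hb0 hb1 (by positivity)
  have htn : t ^ (n0+1) = (3+a)/4 := Real.rpow_inv_natCast_pow hb0 (Nat.succ_ne_zero n0)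
  have hlim : Filter.Tendsto (fun m => t ^ m) Filter.atTop (nhds 0) :=
    tendsto_pow_atTop_nhds_zero_of_lt_one ht0 ht1
  have hev : ∀ᶠ m in Filter.atTop, t ^ m < (1-a)/2 :=
    hlim.eventually (eventually_lt_nhds (show (0:ℝ) < (1-a)/2 by linarith))
  obtain ⟨M, hM⟩ := Filter.eventually_atTop.mp hev
  obtain ⟨m0, hm0T, hm0⟩ := hT.exists_gt M
  have htm : t ^ (m0+1) < (1-a)/2 := hM (m0+1) (by omega)
  have hgn0 : g n0 = ↑y := congrArg Subtype.val (show _ = y from hn0)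
  have hgm0 : g m0 = ↑y := congrArg Subtype.val (show _ = y from hm0T)
  have h1 : ‖monomial (n0+1) - ↑y‖ ≤ ε := by have := hg n0; rwa [hgn0] at this
  have h2 : ‖monomial (m0+1) - ↑y‖ ≤ ε := by have := hg m0; rwa [hgm0] at this
  have hd : ‖monomial (n0+1) - monomial (m0+1)‖ ≤ a := by
    have htri := dist_triangle (monomial (n0+1)) (y : C(Set.Icc (0:ℝ) 1, ℝ)) (monomial (m0+1))
    rw [dist_eq_norm, dist_eq_norm, dist_eq_norm, norm_sub_rev (y : C(Set.Icc (0:ℝ) 1, ℝ))] at htri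
    linarith
  set xI : Set.Icc (0:ℝ) 1 := ⟨t, ht0, le_of_lt ht1⟩ with hxI
  have heval : |t^(n0+1) - t^(m0+1)| ≤ ‖monomial (n0+1) - monomial (m0+1)‖ := by
    have := ContinuousMap.norm_coe_le_norm (monomial (n0+1) - monomial (m0+1)) xI
    simpa [monomial, ContinuousMap.sub_apply] using this
  rw [htn] at heval
  have habs : (3+a)/4 - t^(m0+1) ≤ |(3+a)/4 - t^(m0+1)| := le_abs_self _
  linarith

/-- The Hausdorff measure of non-compactness of the family
`ℱ = {x ↦ xⁿ : n ≥ 1} ⊆ C([0,1], ℝ)` equals `1/2`. -/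
theorem hausdorff_mnc_of_monomials :
    sInf {ε : ℝ | 0 < ε ∧ ∃ G : Finset C(Set.Icc (0 : ℝ) 1, ℝ),
      ∀ n : ℕ, 1 ≤ n → ∃ g ∈ G, ‖monomial n - g‖ ≤ ε} = 1 / 2 := by
  refine le_antisymm (csInf_le ⟨0, fun x hx => hx.1.le⟩ half_mem_mnc_set)
    (le_csInf ⟨1/2, half_mem_mnc_set⟩ fun ε hε => ?_)
  obtain ⟨hε0, G, hG⟩ := hε
  exact mnc_lower_bound ε hε0 G hG
end
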